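/- Fix n ∈ {0,1,2}. Let H be a connected simple graph and f : H → P_n a surjective graph homomorphism (surjective on vertices). Then H contains a connected subgraph A such that the restriction of f to A is a graph isomorphism onto P_n, and there exists a graph homomorphism φ : H → A with f ∘ φ = f (so (H,f) homomorphically maps onto (A, f restricted to A) in the slice category Gra/P_n). -/

import Mathlib

open SimpleGraph

/-- Fix `n ∈ {0,1,2}`. Let `H` be a connected simple graph and `f : H → Pₙ` a surjective
graph homomorphism, where `Pₙ = pathGraph (n+1)` is the path with `n` edges and `n+1`
vertices. Then `H` contains a connected (induced) subgraph `A` such that the restriction of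
`f` to `A` is a graph isomorphism onto `Pₙ`, and there exists a graph homomorphism
`φ : H → A` with `f ∘ φ = f`; that is, `(H, f)` homomorphically maps onto `(A, f|A)` in the
slice category `Gra/Pₙ`. -/
theorem stmt14 (n : ℕ) (hn : n ∈ ({0, 1, 2} : Set ℕ)) {V : Type*} (H : SimpleGraph V)
    (hconn : H.Connected) (f : H →g pathGraph (n + 1)) (hsurj : Function.Surjective f) :
    ∃ s : Set V, (H.induce s).Connected ∧
      (∃ e : H.induce s ≃g pathGraph (n + 1), ∀ x : s, e x = f (x : V)) ∧
      ∃ φ : H →g H.induce s, ∀ x : V, f ((φ x : s) : V) = f x := by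
  have hadj : ∀ {a b : V}, H.Adj a b →
      ((f a).val + 1 = (f b).val ∨ (f b).val + 1 = (f a).val) := by
    intro a b h
    exact pathGraph_adj.mp (f.map_adj h)
  rcases hn with rfl | rfl | rfl
  · -- n = 0
    have hbot : ∀ {a b : V}, ¬ H.Adj a b := by
      intro a b h
      have := hadj h
      have h1 : (f a).val < 1 := (f a).isLt
      have h2 : (f b).val < 1 := (f b).isLt
      omega
    obtain ⟨b⟩ := hconn.nonempty
    have e : H.induce ({b} : Set V) ≃g pathGraph 1 :=
      { toEquiv := Equiv.ofUnique _ _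
        map_rel_iff' := by
          intro a c
          constructor
          · intro h
            rw [pathGraph_adj] at h
            have h1 : ((Equiv.ofUnique ↥({b} : Set V) (Fin 1)) a).val < 1 := Fin.isLt _
            have h2 : ((Equiv.ofUnique ↥({b} : Set V) (Fin 1)) c).val < 1 := Fin.isLt _
            omega
          · intro h
            simp only [comap_adj, Function.Embedding.coe_subtype] at h
            exact absurd h hbot }
    refine ⟨{b}, (Iso.connected_iff e).mpr (pathGraph_connected 0), ⟨e, ?_⟩, ?_⟩
    · intro x
      exact Fin.ext (by omega)
    · exact ⟨⟨fun _ => ⟨b, rfl⟩, fun h => absurd h hbot⟩, fun x => Fin.ext (by omega)⟩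
  · -- n = 1
    obtain ⟨b, hb⟩ := hsurj 0
    obtain ⟨c, hc⟩ := hsurj 1
    obtain ⟨p⟩ := hconn b c
    obtain ⟨u, v, huv, hu, hv⟩ : ∃ u v : V, H.Adj u v ∧ (f u).val = 0 ∧ (f v).val = 1 := by
      cases p with
      | nil => rw [hb] at hc; exact absurd hc (by decide)
      | cons h q =>
        rename_i x
        refine ⟨b, x, h, by rw [hb]; rfl, ?_⟩
        have := hadj h
        have h1 : (f x).val < 2 := (f x).isLt
        have hb' : (f b).val = 0 := by rw [hb]; rfl
        omega
    set s : Set V := {u, v} with hs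
    have hus : u ∈ s := Or.inl rfl
    have hvs : v ∈ s := Or.inr rfl
    have hmem : ∀ x : V, x ∈ s → x = u ∨ x = v := fun x hx => hx
    have key : ∀ x : s, ((x : V) = u ∧ (f (x : V)).val = 0) ∨
        ((x : V) = v ∧ (f (x : V)).val = 1) := by
      rintro ⟨x, hx⟩
      rcases hmem x hx with rfl | rfl
      · exact Or.inl ⟨rfl, hu⟩
      · exact Or.inr ⟨rfl, hv⟩
    obtain ⟨e, he⟩ : ∃ e : H.induce s ≃g pathGraph 2, ∀ x : s, e x = f (x : V) :=
      ⟨{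
        toFun := fun x => f (x : V)
        invFun := fun i => if i.val = 0 then ⟨u, hus⟩ else ⟨v, hvs⟩
        left_inv := by
          rintro x
          rcases key x with ⟨hx, hfx⟩ | ⟨hx, hfx⟩ <;>
            simp [hfx, Subtype.ext_iff, hx, hu, hv]
        right_inv := by
          intro i
          fin_cases i <;> simp [hu, hv, Fin.ext_iff]
        map_rel_iff' := by
          rintro a c
          simp only [Equiv.coe_fn_mk, comap_adj, Function.Embedding.coe_subtype]
          constructor
          · intro h
            rw [pathGraph_adj] at h
            rcases key a with ⟨ha, hfa⟩ | ⟨ha, hfa⟩ <;>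
              rcases key c with ⟨hc2, hfc⟩ | ⟨hc2, hfc⟩ <;>
              rw [ha, hc2] <;> first
                | (exact absurd h (by omega))
                | exact huv
                | exact huv.symm
          · intro h
            exact f.map_adj h }, fun x => rfl⟩
    refine ⟨s, (Iso.connected_iff e).mpr (pathGraph_connected 1), ⟨e, he⟩, ?_⟩
    have hφadj : ∀ {a b : V}, H.Adj a b →
        (H.induce s).Adj (if (f a).val = 0 then ⟨u, hus⟩ else ⟨v, hvs⟩)
          (if (f b).val = 0 then ⟨u, hus⟩ else ⟨v, hvs⟩) := by
      intro a b h
      have := hadj h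
      have h1 : (f a).val < 2 := (f a).isLt
      have h2 : (f b).val < 2 := (f b).isLt
      rcases Nat.eq_zero_or_pos (f a).val with ha | ha
      · have hb2 : (f b).val = 1 := by omega
        simp only [ha, hb2, if_pos rfl, if_neg (by omega : ¬ (1:ℕ) = 0)]
        exact huv
      · have ha2 : (f a).val = 1 := by omega
        have hb2 : (f b).val = 0 := by omega
        simp only [ha2, hb2, if_pos rfl, if_neg (by omega : ¬ (1:ℕ) = 0)]
        exact huv.symm
    have hfun : ∀ x : V,
        f (((if (f x).val = 0 then (⟨u, hus⟩ : s) else ⟨v, hvs⟩) : s) : V) = f x := by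
      intro x
      have h1 : (f x).val < 2 := (f x).isLt
      rcases Nat.eq_zero_or_pos (f x).val with hx | hx
      · rw [if_pos hx]
        exact Fin.ext (by rw [hu]; omega)
      · have hx2 : (f x).val = 1 := by omega
        rw [if_neg (by omega)]
        exact Fin.ext (by rw [hv]; omega)
    exact ⟨⟨fun x => if (f x).val = 0 then ⟨u, hus⟩ else ⟨v, hvs⟩, hφadj⟩, hfun⟩
  · -- n = 2
    obtain ⟨b, hb⟩ := hsurj 0
    obtain ⟨c, hc⟩ := hsurj 2
    have hb' : (f b).val = 0 := by rw [hb]; rfl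
    have hc' : (f c).val = 2 := by rw [hc]; rfl
    obtain ⟨p⟩ := hconn b c
    have key : ∀ (x y : V) (p : H.Walk x y), (f y).val = 2 →
        ((f x).val = 0 ∨ ((f x).val = 1 ∧ ∃ u, H.Adj u x ∧ (f u).val = 0)) →
        ∃ u v w : V, H.Adj u v ∧ H.Adj v w ∧
          (f u).val = 0 ∧ (f v).val = 1 ∧ (f w).val = 2 := by
      intro x y p
      induction p with
      | nil =>
        intro hy hx
        rcases hx with h0 | ⟨h1, -⟩ <;> omega
      | cons h q ih =>
        rename_i x m y
        intro hy hx
        have hab := hadj h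
        have h1 : (f x).val < 3 := (f x).isLt
        have h2 : (f m).val < 3 := (f m).isLt
        rcases hx with h0 | ⟨hone, u, hux, hu0⟩
        · have hm : (f m).val = 1 := by omega
          exact ih hy (Or.inr ⟨hm, x, h, h0⟩)
        · rcases (by omega : (f m).val = 0 ∨ (f m).val = 2) with hm | hm
          · exact ih hy (Or.inl hm)
          · exact ⟨u, x, m, hux, h, hu0, hone, hm⟩
    obtain ⟨u, v, w, huv, hvw, hfu, hfv, hfw⟩ := key b c p hc' (Or.inl hb')
    set s : Set V := {u, v, w} with hs
    have hus : u ∈ s := Or.inl rfl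
    have hvs : v ∈ s := Or.inr (Or.inl rfl)
    have hws : w ∈ s := Or.inr (Or.inr rfl)
    have hmem : ∀ x : V, x ∈ s → x = u ∨ x = v ∨ x = w := fun x hx => hx
    have key2 : ∀ x : s, ((x : V) = u ∧ (f (x : V)).val = 0) ∨
        ((x : V) = v ∧ (f (x : V)).val = 1) ∨
        ((x : V) = w ∧ (f (x : V)).val = 2) := by
      rintro ⟨x, hx⟩
      rcases hmem x hx with rfl | rfl | rfl
      · exact Or.inl ⟨rfl, hfu⟩
      · exact Or.inr (Or.inl ⟨rfl, hfv⟩)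
      · exact Or.inr (Or.inr ⟨rfl, hfw⟩)
    obtain ⟨e, he⟩ : ∃ e : H.induce s ≃g pathGraph 3, ∀ x : s, e x = f (x : V) :=
      ⟨{
        toFun := fun x => f (x : V)
        invFun := fun i =>
          if i.val = 0 then ⟨u, hus⟩ else if i.val = 1 then ⟨v, hvs⟩ else ⟨w, hws⟩
        left_inv := by
          rintro x
          rcases key2 x with ⟨hx, hfx⟩ | ⟨hx, hfx⟩ | ⟨hx, hfx⟩ <;>
            simp [hfx, Subtype.ext_iff, hx, hfu, hfv, hfw]
        right_inv := by
          intro i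
          fin_cases i <;> simp [hfu, hfv, hfw, Fin.ext_iff]
        map_rel_iff' := by
          rintro a c
          simp only [Equiv.coe_fn_mk, comap_adj, Function.Embedding.coe_subtype]
          constructor
          · intro h
            rw [pathGraph_adj] at h
            rcases key2 a with ⟨ha, hfa⟩ | ⟨ha, hfa⟩ | ⟨ha, hfa⟩ <;>
              rcases key2 c with ⟨hc2, hfc⟩ | ⟨hc2, hfc⟩ | ⟨hc2, hfc⟩ <;>
              rw [ha, hc2] <;> first
                | (exact absurd h (by omega))
                | exact huv
                | exact huv.symm
                | exact hvw
                | exact hvw.symm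
          · intro h
            exact f.map_adj h }, fun x => rfl⟩
    refine ⟨s, (Iso.connected_iff e).mpr (pathGraph_connected 2), ⟨e, he⟩, ?_⟩
    have hφadj : ∀ {a b : V}, H.Adj a b →
        (H.induce s).Adj
          (if (f a).val = 0 then ⟨u, hus⟩ else if (f a).val = 1 then ⟨v, hvs⟩ else ⟨w, hws⟩)
          (if (f b).val = 0 then ⟨u, hus⟩ else if (f b).val = 1 then ⟨v, hvs⟩ else ⟨w, hws⟩)
        := by
      intro a b h
      have hab := hadj h
      have h1 : (f a).val < 3 := (f a).isLt
      have h2 : (f b).val < 3 := (f b).isLt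
      rcases (by omega : ((f a).val = 0 ∧ (f b).val = 1) ∨ ((f a).val = 1 ∧ (f b).val = 0) ∨
          ((f a).val = 1 ∧ (f b).val = 2) ∨ ((f a).val = 2 ∧ (f b).val = 1)) with
        ⟨ha, hb2⟩ | ⟨ha, hb2⟩ | ⟨ha, hb2⟩ | ⟨ha, hb2⟩
      · rw [if_pos ha, if_neg (by omega), if_pos hb2]
        exact huv
      · rw [if_neg (by omega), if_pos ha, if_pos hb2]
        exact huv.symm
      · rw [if_neg (by omega), if_pos ha, if_neg (by omega), if_neg (by omega)]
        exact hvw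
      · rw [if_neg (by omega), if_neg (by omega), if_neg (by omega), if_pos hb2]
        exact hvw.symm
    have hfun : ∀ x : V,
        f (((if (f x).val = 0 then (⟨u, hus⟩ : s) else if (f x).val = 1 then ⟨v, hvs⟩
          else ⟨w, hws⟩) : s) : V) = f x := by
      intro x
      have h1 : (f x).val < 3 := (f x).isLt
      rcases (by omega : (f x).val = 0 ∨ (f x).val = 1 ∨ (f x).val = 2) with hx | hx | hx
      · rw [if_pos hx]
        exact Fin.ext (by rw [hfu]; omega)
      · rw [if_neg (by omega), if_pos hx]
        exact Fin.ext (by rw [hfv]; omega)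
      · rw [if_neg (by omega), if_neg (by omega)]
        exact Fin.ext (by rw [hfw]; omega)
    exact ⟨⟨fun x => if (f x).val = 0 then ⟨u, hus⟩ else if (f x).val = 1 then ⟨v, hvs⟩
      else ⟨w, hws⟩, hφadj⟩, hfun⟩
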